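/- Minimizing $\frac{1}{2}\|y - \tilde X \phi\|^2 + w^T\phi$ subject to $D\phi \ge 0$, $L\phi = 0$: if $\hat\phi$ is optimal with active set $\mathcal{A} = \{i : (D\hat\phi)_i > 0\}$ and $P$ is the orthogonal projection onto $\mathrm{null}(L) \cap \mathrm{null}(D_{-\mathcal{A}})$, then $P\hat\phi = \hat\phi$ and $P\tilde X^T(y - \tilde X \hat\phi) = Pw$, and consequently the fitted value satisfies $\tilde X \hat\phi = (\tilde X P)(\tilde X P)^+ (y - (P\tilde X^T)^+ w)$. -/

import Mathlib

open Matrix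

def IsMoorePenrose {m n : ℕ} (A : Matrix (Fin m) (Fin n) ℝ)
    (B : Matrix (Fin n) (Fin m) ℝ) : Prop :=
  A * B * A = A ∧ B * A * B = B ∧ (A * B)ᵀ = A * B ∧ (B * A)ᵀ = B * A

theorem stmt_19 (n d r s : ℕ)
    (X : Matrix (Fin n) (Fin d) ℝ)
    (D : Matrix (Fin r) (Fin d) ℝ) (L : Matrix (Fin s) (Fin d) ℝ)
    (w : Fin d → ℝ) (y : Fin n → ℝ)
    (φ : Fin d → ℝ) (μ : Fin r → ℝ) (ν : Fin s → ℝ)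
    (A : Set (Fin r)) (hA : A = {i | 0 < D.mulVec φ i})
    (hstat : Xᵀ.mulVec (y - X.mulVec φ) = w - Dᵀ.mulVec μ + Lᵀ.mulVec ν)
    (hμ : ∀ i, 0 ≤ μ i) (hμA : ∀ i ∈ A, μ i = 0)
    (hL : L.mulVec φ = 0) (hDfeas : ∀ i, 0 ≤ D.mulVec φ i)
    (P : Matrix (Fin d) (Fin d) ℝ)
    (hPsym : Pᵀ = P) (hPidem : P * P = P)
    (hPrange : ∀ v : Fin d → ℝ, P.mulVec v = v ↔
      (L.mulVec v = 0 ∧ ∀ i ∉ A, D.mulVec v i = 0))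
    (XPinv : Matrix (Fin d) (Fin n) ℝ)
    (hXPinv : IsMoorePenrose (X * P) XPinv)
    (PXtinv : Matrix (Fin n) (Fin d) ℝ)
    (hPXtinv : IsMoorePenrose (P * Xᵀ) PXtinv) :
    P.mulVec φ = φ ∧
    P.mulVec (Xᵀ.mulVec (y - X.mulVec φ)) = P.mulVec w ∧
    X.mulVec φ = (X * P * XPinv).mulVec (y - PXtinv.mulVec w) := by
  -- Part 1
  have h1 : P.mulVec φ = φ := by
    rw [hPrange]
    refine ⟨hL, fun i hi => ?_⟩
    rw [hA] at hi
    exact le_antisymm (not_lt.mp hi) (hDfeas i)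
  -- P v is in the range for every v
  have hPP : ∀ v : Fin d → ℝ, P.mulVec (P.mulVec v) = P.mulVec v := by
    intro v; rw [Matrix.mulVec_mulVec, hPidem]
  have hLP : L * P = 0 := by
    ext i j
    have := ((hPrange (P.mulVec (Pi.single j 1))).mp (hPP _)).1
    have h := congrFun this i
    rw [Matrix.mulVec_mulVec] at h
    simpa [Matrix.mulVec_mulVec] using h
  have hDP : ∀ i ∉ A, ∀ j, (D * P) i j = 0 := by
    intro i hi j
    have := ((hPrange (P.mulVec (Pi.single j 1))).mp (hPP _)).2 i hi
    rw [Matrix.mulVec_mulVec] at this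
    simpa [Matrix.mulVec_mulVec] using this
  -- P * Lᵀ = 0
  have hPLt : P * Lᵀ = 0 := by
    rw [← hPsym, ← Matrix.transpose_mul, hLP, Matrix.transpose_zero]
  have hPLt' : P.mulVec (Lᵀ.mulVec ν) = 0 := by
    rw [Matrix.mulVec_mulVec, hPLt, Matrix.zero_mulVec]
  have hPDt : P.mulVec (Dᵀ.mulVec μ) = 0 := by
    rw [Matrix.mulVec_mulVec]
    have : P * Dᵀ = (D * P)ᵀ := by rw [Matrix.transpose_mul, hPsym]
    rw [this]
    funext k
    simp only [Matrix.mulVec, dotProduct, Matrix.transpose_apply, Pi.zero_apply]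
    apply Finset.sum_eq_zero
    intro i _
    by_cases hi : i ∈ A
    · rw [hμA i hi, mul_zero]
    · rw [hDP i hi k, zero_mul]
  have h2 : P.mulVec (Xᵀ.mulVec (y - X.mulVec φ)) = P.mulVec w := by
    rw [hstat, Matrix.mulVec_add, Matrix.mulVec_sub, hPLt', hPDt]
    simp
  -- Part 3
  set M := X * P with hM
  set N := P * Xᵀ with hN
  have hMt : Mᵀ = N := by rw [hM, hN, Matrix.transpose_mul, hPsym]
  obtain ⟨hM1, hM2, hM3, hM4⟩ := hXPinv
  obtain ⟨hN1, hN2, hN3, hN4⟩ := hPXtinv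
  -- key: N.mulVec (y - X.mulVec φ) = P.mulVec w
  have hkey : N.mulVec (y - X.mulVec φ) = P.mulVec w := by
    rw [← h2, ← Matrix.mulVec_mulVec]
  -- N * N⁺ * P = N * N⁺
  have hPN : P * N = N := by rw [hN, ← Matrix.mul_assoc, hPidem]
  have hNNP : N * PXtinv * P = N * PXtinv := by
    have h : P * (N * PXtinv) = N * PXtinv := by rw [← Matrix.mul_assoc, hPN]
    calc N * PXtinv * P = ((N * PXtinv)ᵀ)ᵀ * Pᵀᵀ := by
          rw [Matrix.transpose_transpose, Matrix.transpose_transpose]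
    _ = (Pᵀ * (N * PXtinv)ᵀ)ᵀ := by rw [← Matrix.transpose_mul]
    _ = (P * (N * PXtinv))ᵀ := by rw [hPsym, hN3]
    _ = (N * PXtinv)ᵀ := by rw [h]
    _ = N * PXtinv := hN3

  -- N N⁺ w = N (y - Xφ)
  have hNNw : (N * PXtinv).mulVec w = N.mulVec (y - X.mulVec φ) := by
    calc (N * PXtinv).mulVec w = (N * PXtinv * P).mulVec w := by rw [hNNP]
    _ = (N * PXtinv).mulVec (P.mulVec w) := by rw [← Matrix.mulVec_mulVec]
    _ = (N * PXtinv).mulVec (N.mulVec (y - X.mulVec φ)) := by rw [hkey]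
    _ = (N * PXtinv * N).mulVec (y - X.mulVec φ) := by rw [Matrix.mulVec_mulVec]
    _ = N.mulVec (y - X.mulVec φ) := by
        rw [hN1]
  have hXφ : X.mulVec φ = M.mulVec φ := by
    conv_lhs => rw [← h1]
    rw [Matrix.mulVec_mulVec]
  -- M M⁺ = XPinvᵀ * N
  have hMMt : M * XPinv = XPinvᵀ * N := by
    rw [← hM3, Matrix.transpose_mul, hMt]
  refine ⟨h1, h2, Eq.symm ?_⟩
  calc (X * P * XPinv).mulVec (y - PXtinv.mulVec w)
      = (M * XPinv).mulVec (y - PXtinv.mulVec w) := rfl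
    _ = (XPinvᵀ * N).mulVec (y - PXtinv.mulVec w) := by rw [hMMt]
    _ = XPinvᵀ.mulVec (N.mulVec (y - PXtinv.mulVec w)) := by rw [← Matrix.mulVec_mulVec]
    _ = XPinvᵀ.mulVec (N.mulVec y - (N * PXtinv).mulVec w) := by
        rw [Matrix.mulVec_sub, Matrix.mulVec_mulVec]
    _ = XPinvᵀ.mulVec (N.mulVec y - (N.mulVec y - N.mulVec (X.mulVec φ))) := by
        rw [hNNw]; simp [Matrix.mulVec_sub]
    _ = XPinvᵀ.mulVec (N.mulVec (X.mulVec φ)) := by rw [sub_sub_cancel]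
    _ = (XPinvᵀ * N).mulVec (X.mulVec φ) := by rw [Matrix.mulVec_mulVec]
    _ = (M * XPinv).mulVec (M.mulVec φ) := by rw [← hMMt, hXφ]
    _ = (M * XPinv * M).mulVec φ := by rw [Matrix.mulVec_mulVec]
    _ = M.mulVec φ := by rw [hM1]
    _ = X.mulVec φ := hXφ.symm
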